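/- The real number t = 1.41422 fits every finite simple triangle-free graph G; that is, for every finite simple graph G = (V,E) containing no triangle and every m-element subset M ⊆ V, the induced subgraph G[M] has at most 1.41422^m inclusion-maximal independent sets. (This follows since every triangle-free graph on m vertices has at most 2^{m/2} inclusion-maximal independent sets and 1.41422^2 > 2.) -/

import Mathlib

set_option linter.unusedSectionVars false
set_option maxHeartbeats 1000000
open Finset


/-- `S` is an independent set of the graph `G` (no two of its vertices are adjacent). -/
def IsIndepIn {V : Type*} (G : SimpleGraph V) (S : Finset V) : Prop :=
  ∀ v ∈ S, ∀ w ∈ S, ¬ G.Adj v w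

/-- `S` is an inclusion-maximal independent set of the induced subgraph `G[W]`:
it is an independent subset of `W` contained in no strictly larger independent
subset of `W`. -/
def IsMaxIndepIn {V : Type*} (G : SimpleGraph V) (W S : Finset V) : Prop :=
  S ⊆ W ∧ IsIndepIn G S ∧ ∀ T : Finset V, T ⊆ W → IsIndepIn G T → S ⊆ T → T = S

/-- The induced subgraph `G[W]` admits a proper list-coloring with respect to
the lists `L v`, `v ∈ W`. -/
def ListColorableOn {V : Type*} (G : SimpleGraph V) (L : V → Finset ℕ) (W : Finset V) : Prop :=
  ∃ f : V → ℕ, (∀ v ∈ W, f v ∈ L v) ∧ ∀ v ∈ W, ∀ w ∈ W, G.Adj v w → f v ≠ f w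

/-- The number of inclusion-maximal independent sets of the induced subgraph `G[W]`. -/
noncomputable def numMaxIndep {V : Type*} (G : SimpleGraph V) (W : Finset V) : ℕ :=
  {S : Finset V | IsMaxIndepIn G W S}.ncard


section aux
variable {V : Type*} [Fintype V] [DecidableEq V] {G : SimpleGraph V} {M S T : Finset V} {v u w : V}

open scoped Classical in
/-- closed neighborhood of `v` within `M` -/
noncomputable def nbhdF (G : SimpleGraph V) (M : Finset V) (v : V) : Finset V :=
  insert v (M.filter fun w => G.Adj v w)

open scoped Classical in
/-- degree of `v` within `M` -/
noncomputable def degF (G : SimpleGraph V) (M : Finset V) (v : V) : ℕ :=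
  (M.filter fun w => G.Adj v w).card

lemma mem_nbhdF {w : V} : w ∈ nbhdF G M v ↔ w = v ∨ (w ∈ M ∧ G.Adj v w) := by
  classical
  simp [nbhdF]

lemma self_mem_nbhdF : v ∈ nbhdF G M v := mem_nbhdF.2 (Or.inl rfl)

lemma nbhdF_subset (hv : v ∈ M) : nbhdF G M v ⊆ M := by
  intro a ha
  rcases mem_nbhdF.1 ha with rfl | h
  · exact hv
  · exact h.1

lemma card_nbhdF : (nbhdF G M v).card = degF G M v + 1 := by
  classical
  rw [nbhdF, degF, card_insert_of_notMem]
  intro h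
  exact G.irrefl (mem_filter.1 h).2

lemma one_le_degF (hu : u ∈ M) (h : G.Adj v u) : 1 ≤ degF G M v := by
  classical
  rw [degF]
  exact card_pos.2 ⟨u, mem_filter.2 ⟨hu, h⟩⟩

lemma degF_eq_zero (h : degF G M v = 0) (hu : u ∈ M) (hadj : G.Adj v u) : False := by
  have := one_le_degF hu hadj
  omega

lemma degF_eq_one (h : degF G M v = 1) :
    ∃ u, u ∈ M ∧ G.Adj v u ∧ ∀ s ∈ M, G.Adj v s → s = u := by
  classical
  rw [degF] at h
  obtain ⟨a, ha⟩ := card_eq_one.1 h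
  have hm : ∀ s, s ∈ M ∧ G.Adj v s ↔ s = a := by
    intro s
    rw [← mem_filter (s := M), ha, mem_singleton]
  obtain ⟨ha1, ha2⟩ := (hm a).2 rfl
  exact ⟨a, ha1, ha2, fun s hs hadj => (hm s).1 ⟨hs, hadj⟩⟩

lemma degF_eq_two (h : degF G M v = 2) :
    ∃ u w, u ≠ w ∧ u ∈ M ∧ w ∈ M ∧ G.Adj v u ∧ G.Adj v w ∧
      ∀ s ∈ M, G.Adj v s → s = u ∨ s = w := by
  classical
  rw [degF] at h
  obtain ⟨a, b, hab, hEq⟩ := card_eq_two.1 h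
  have hm : ∀ s, s ∈ M ∧ G.Adj v s ↔ s = a ∨ s = b := by
    intro s
    rw [← mem_filter (s := M), hEq, mem_insert, mem_singleton]
  obtain ⟨ha1, ha2⟩ := (hm a).2 (Or.inl rfl)
  obtain ⟨hb1, hb2⟩ := (hm b).2 (Or.inr rfl)
  exact ⟨a, b, hab, ha1, hb1, ha2, hb2, fun s hs hadj => (hm s).1 ⟨hs, hadj⟩⟩

lemma indep_subset (h : IsIndepIn G S) (hTS : T ⊆ S) : IsIndepIn G T :=
  fun a ha b hb => h a (hTS ha) b (hTS hb)

lemma noTriangle (hG : G.CliqueFree 3) {a b c : V} (h1 : G.Adj a b) (h2 : G.Adj a c)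
    (h3 : G.Adj b c) : False :=
  hG {a, b, c} (SimpleGraph.is3Clique_triple_iff.2 ⟨h1, h2, h3⟩)

lemma erase_max (hS : IsMaxIndepIn G M S) (hv : v ∈ S) :
    IsMaxIndepIn G (M \ nbhdF G M v) (S.erase v) := by
  obtain ⟨hSM, hind, hmax⟩ := hS
  refine ⟨?_, indep_subset hind (erase_subset _ _), ?_⟩
  · intro a ha
    rw [mem_erase] at ha
    rw [mem_sdiff]
    refine ⟨hSM ha.2, fun h => ?_⟩
    rcases mem_nbhdF.1 h with rfl | h'
    · exact ha.1 rfl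
    · exact hind v hv a ha.2 h'.2
  · intro T hTM hTind hST
    have hvT : v ∉ T := fun h => (mem_sdiff.1 (hTM h)).2 self_mem_nbhdF
    have h1 : insert v T ⊆ M := by
      intro a ha
      rcases mem_insert.1 ha with rfl | ha
      · exact hSM hv
      · exact (mem_sdiff.1 (hTM ha)).1
    have key : ∀ b ∈ T, ¬ G.Adj v b := fun b hb hadj =>
      (mem_sdiff.1 (hTM hb)).2 (mem_nbhdF.2 (Or.inr ⟨(mem_sdiff.1 (hTM hb)).1, hadj⟩))
    have h2 : IsIndepIn G (insert v T) := by
      intro a ha b hb hadj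
      rcases mem_insert.1 ha with ha' | ha' <;> rcases mem_insert.1 hb with hb' | hb'
      · rw [ha', hb'] at hadj; exact G.irrefl hadj
      · rw [ha'] at hadj; exact key b hb' hadj
      · rw [hb'] at hadj; exact key a ha' hadj.symm
      · exact hTind a ha' b hb' hadj
    have h3 : S ⊆ insert v T := by
      intro s hs
      by_cases h : s = v
      · subst h; exact mem_insert_self _ _
      · exact mem_insert_of_mem (hST (mem_erase.2 ⟨h, hs⟩))
    have h4 := hmax _ h1 h2 h3
    rw [← h4, erase_insert hvT]

lemma notmem_max (hS : IsMaxIndepIn G M S) (hv : v ∉ S) : IsMaxIndepIn G (M.erase v) S := by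
  obtain ⟨hSM, hind, hmax⟩ := hS
  exact ⟨fun a ha => mem_erase.2 ⟨fun h => hv (h ▸ ha), hSM ha⟩, hind,
    fun T hT hTi hST => hmax T (hT.trans (erase_subset _ _)) hTi hST⟩

lemma exists_adj_of_not_mem (hS : IsMaxIndepIn G M S) (hv : v ∈ M) (hvS : v ∉ S) :
    ∃ u ∈ S, G.Adj v u := by
  by_contra h
  push_neg at h
  obtain ⟨hSM, hind, hmax⟩ := hS
  have h2 : IsIndepIn G (insert v S) := by
    intro a ha b hb hadj
    rcases mem_insert.1 ha with ha' | ha' <;> rcases mem_insert.1 hb with hb' | hb'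
    · rw [ha', hb'] at hadj; exact G.irrefl hadj
    · rw [ha'] at hadj; exact h b hb' hadj
    · rw [hb'] at hadj; exact h a ha' hadj.symm
    · exact hind a ha' b hb' hadj
  have := hmax _ (insert_subset hv hSM) h2 (subset_insert _ _)
  exact hvS (this ▸ mem_insert_self v S)

lemma class_bound (v : V) :
    ({S : Finset V | IsMaxIndepIn G M S ∧ v ∈ S}).ncard ≤ numMaxIndep G (M \ nbhdF G M v) := by
  apply Set.ncard_le_ncard_of_injOn (fun S => S.erase v)
  · rintro S ⟨hS, hv⟩
    exact erase_max hS hv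
  · rintro S₁ ⟨_, h1⟩ S₂ ⟨_, h2⟩ h
    rw [← insert_erase h1, ← insert_erase h2]
    exact congrArg (insert v) h

lemma class_bound2 (v : V) :
    ({S : Finset V | IsMaxIndepIn G M S ∧ v ∉ S}).ncard ≤ numMaxIndep G (M.erase v) := by
  apply Set.ncard_le_ncard_of_injOn id
  · rintro S ⟨hS, hv⟩
    exact notmem_max hS hv
  · exact fun a _ b _ h => h

end aux

section main
variable {V : Type*} [Fintype V] [DecidableEq V]

lemma degF_eq_two' {G : SimpleGraph V} {M : Finset V} {v u : V}
    (h : degF G M v = 2) (hu : u ∈ M) (hadj : G.Adj v u) :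
    ∃ x, x ≠ u ∧ x ∈ M ∧ G.Adj v x ∧ ∀ s ∈ M, G.Adj v s → s = u ∨ s = x := by
  obtain ⟨a, b, hab, haM, hbM, ha, hb, hall⟩ := degF_eq_two h
  rcases hall u hu hadj with rfl | rfl
  · exact ⟨b, Ne.symm hab, hbM, hb, fun s hs h' => hall s hs h'⟩
  · exact ⟨a, hab, haM, ha, fun s hs h' => (hall s hs h').symm⟩

theorem key (G : SimpleGraph V) (hG : G.CliqueFree 3) :
    ∀ n (M : Finset V), M.card = n → (numMaxIndep G M : ℝ) ≤ (1.41422 : ℝ) ^ n := by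
  have ht1 : (1 : ℝ) ≤ 1.41422 := by norm_num
  intro n
  induction n using Nat.strong_induction_on with
  | _ n IH =>
  intro M hMn
  by_cases hMe : M = ∅
  · subst hMe
    have h1 : {S : Finset V | IsMaxIndepIn G ∅ S} = {∅} := by
      ext S
      simp only [Set.mem_setOf_eq, Set.mem_singleton_iff]
      constructor
      · rintro ⟨h1, -, -⟩
        exact subset_empty.1 h1
      · rintro rfl
        exact ⟨subset_rfl, fun a ha => absurd ha (notMem_empty a),
          fun T hT _ _ => subset_empty.1 hT⟩
    rw [numMaxIndep, h1, Set.ncard_singleton]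
    have := one_le_pow₀ (n := n) ht1
    exact_mod_cast this
  -- main counting helper: maximal indep sets containing v
  have main1 : ∀ v ∈ M, ∀ k : ℕ, degF G M v + 1 + k ≥ n →
      (({S : Finset V | IsMaxIndepIn G M S ∧ v ∈ S}).ncard : ℝ) ≤ (1.41422 : ℝ) ^ k := by
    intro v hv k hk
    have hsub : nbhdF G M v ⊆ M := nbhdF_subset hv
    have hcard : (M \ nbhdF G M v).card + (nbhdF G M v).card = M.card :=
      card_sdiff_add_card_eq_card hsub
    have hnb : (nbhdF G M v).card = degF G M v + 1 := card_nbhdF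
    have hlt : (M \ nbhdF G M v).card < n := by omega
    have hle : (M \ nbhdF G M v).card ≤ k := by omega
    calc (({S : Finset V | IsMaxIndepIn G M S ∧ v ∈ S}).ncard : ℝ)
        ≤ (numMaxIndep G (M \ nbhdF G M v) : ℝ) := by exact_mod_cast class_bound v
      _ ≤ (1.41422 : ℝ) ^ (M \ nbhdF G M v).card := IH _ hlt _ rfl
      _ ≤ (1.41422 : ℝ) ^ k := pow_le_pow_right₀ ht1 hle
  have main2 : ∀ v ∈ M, ∀ k : ℕ, k + 1 ≥ n →
      (({S : Finset V | IsMaxIndepIn G M S ∧ v ∉ S}).ncard : ℝ) ≤ (1.41422 : ℝ) ^ k := by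
    intro v hv k hk
    have hcard : (M.erase v).card = M.card - 1 := card_erase_of_mem hv
    have hpos : 0 < M.card := card_pos.2 ⟨v, hv⟩
    have hlt : (M.erase v).card < n := by omega
    have hle : (M.erase v).card ≤ k := by omega
    calc (({S : Finset V | IsMaxIndepIn G M S ∧ v ∉ S}).ncard : ℝ)
        ≤ (numMaxIndep G (M.erase v) : ℝ) := by exact_mod_cast class_bound2 v
      _ ≤ (1.41422 : ℝ) ^ (M.erase v).card := IH _ hlt _ rfl
      _ ≤ (1.41422 : ℝ) ^ k := pow_le_pow_right₀ ht1 hle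
  by_cases hA : ∃ v ∈ M, 3 ≤ degF G M v
  · -- a vertex of degree ≥ 3
    obtain ⟨v, hv, hdeg⟩ := hA
    have hn4 : 4 ≤ n := by
      have h1 := card_le_card (nbhdF_subset (G := G) (v := v) hv)
      have h2 : (nbhdF G M v).card = degF G M v + 1 := card_nbhdF
      omega
    obtain ⟨k, rfl⟩ : ∃ k, n = k + 4 := ⟨n - 4, by omega⟩
    have c1 := main1 v hv k (by omega)
    have c2 := main2 v hv (k + 3) (by omega)
    have hN : numMaxIndep G M ≤
        ({S : Finset V | IsMaxIndepIn G M S ∧ v ∈ S}).ncard +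
        ({S : Finset V | IsMaxIndepIn G M S ∧ v ∉ S}).ncard := by
      rw [numMaxIndep]
      refine le_trans (Set.ncard_le_ncard ?_ (Set.toFinite _)) (Set.ncard_union_le _ _)
      intro S hS
      by_cases h : v ∈ S
      · exact Or.inl ⟨hS, h⟩
      · exact Or.inr ⟨hS, h⟩
    have h0 : (0 : ℝ) ≤ (1.41422 : ℝ) ^ k := by positivity
    calc (numMaxIndep G M : ℝ)
        ≤ (({S : Finset V | IsMaxIndepIn G M S ∧ v ∈ S}).ncard : ℝ) +
          (({S : Finset V | IsMaxIndepIn G M S ∧ v ∉ S}).ncard : ℝ) := by exact_mod_cast hN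
      _ ≤ (1.41422 : ℝ) ^ k + (1.41422 : ℝ) ^ (k + 3) := add_le_add c1 c2
      _ = (1.41422 : ℝ) ^ k * (1 + 1.41422 ^ 3) := by ring
      _ ≤ (1.41422 : ℝ) ^ k * 1.41422 ^ 4 := by
          refine mul_le_mul_of_nonneg_left (by norm_num) h0
      _ = (1.41422 : ℝ) ^ (k + 4) := by ring
  push_neg at hA
  by_cases hB : ∃ v ∈ M, degF G M v = 0
  · -- a vertex of degree 0 : every maximal independent set contains it
    obtain ⟨v, hv, hdeg⟩ := hB
    have hn1 : 1 ≤ n := by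
      have := card_pos.2 ⟨v, hv⟩
      omega
    obtain ⟨k, rfl⟩ : ∃ k, n = k + 1 := ⟨n - 1, by omega⟩
    have c1 := main1 v hv k (by omega)
    have hN : numMaxIndep G M ≤ ({S : Finset V | IsMaxIndepIn G M S ∧ v ∈ S}).ncard := by
      rw [numMaxIndep]
      refine Set.ncard_le_ncard ?_ (Set.toFinite _)
      intro S hS
      refine ⟨hS, ?_⟩
      by_contra h
      obtain ⟨u, huS, hadj⟩ := exists_adj_of_not_mem hS hv h
      exact degF_eq_zero hdeg (hS.1 huS) hadj
    calc (numMaxIndep G M : ℝ)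
        ≤ (({S : Finset V | IsMaxIndepIn G M S ∧ v ∈ S}).ncard : ℝ) := by exact_mod_cast hN
      _ ≤ (1.41422 : ℝ) ^ k := c1
      _ ≤ (1.41422 : ℝ) ^ (k + 1) := pow_le_pow_right₀ ht1 (by omega)
  push_neg at hB
  by_cases hC : ∃ v ∈ M, degF G M v = 1
  · -- a vertex of degree 1
    obtain ⟨v, hv, hdeg⟩ := hC
    obtain ⟨u, huM, hadj, hall⟩ := degF_eq_one hdeg
    have hn2 : 2 ≤ n := by
      have h1 := card_le_card (nbhdF_subset (G := G) (v := v) hv)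
      have h2 : (nbhdF G M v).card = degF G M v + 1 := card_nbhdF
      omega
    obtain ⟨k, rfl⟩ : ∃ k, n = k + 2 := ⟨n - 2, by omega⟩
    have c1 := main1 v hv k (by omega)
    have hdu : 1 ≤ degF G M u := one_le_degF hv hadj.symm
    have c2 := main1 u huM k (by omega)
    have hN : numMaxIndep G M ≤
        ({S : Finset V | IsMaxIndepIn G M S ∧ v ∈ S}).ncard +
        ({S : Finset V | IsMaxIndepIn G M S ∧ u ∈ S}).ncard := by
      rw [numMaxIndep]
      refine le_trans (Set.ncard_le_ncard ?_ (Set.toFinite _)) (Set.ncard_union_le _ _)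
      intro S hS
      by_cases h : v ∈ S
      · exact Or.inl ⟨hS, h⟩
      · refine Or.inr ⟨hS, ?_⟩
        obtain ⟨s, hsS, hsadj⟩ := exists_adj_of_not_mem hS hv h
        have := hall s (hS.1 hsS) hsadj
        rwa [← this]
    calc (numMaxIndep G M : ℝ)
        ≤ (({S : Finset V | IsMaxIndepIn G M S ∧ v ∈ S}).ncard : ℝ) +
          (({S : Finset V | IsMaxIndepIn G M S ∧ u ∈ S}).ncard : ℝ) := by exact_mod_cast hN
      _ ≤ (1.41422 : ℝ) ^ k + (1.41422 : ℝ) ^ k := add_le_add c1 c2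
      _ = (1.41422 : ℝ) ^ k * 2 := by ring
      _ ≤ (1.41422 : ℝ) ^ k * 1.41422 ^ 2 := by
          refine mul_le_mul_of_nonneg_left (by norm_num) (by positivity)
      _ = (1.41422 : ℝ) ^ (k + 2) := by ring
  push_neg at hC
  -- remaining case: every vertex of M has degree exactly 2 in M
  have hdeg2 : ∀ v ∈ M, degF G M v = 2 := by
    intro v hv
    have h1 := hA v hv
    have h2 := hB v hv
    have h3 := hC v hv
    omega
  obtain ⟨v, hv⟩ := nonempty_iff_ne_empty.2 hMe
  obtain ⟨u, w, huw, huM, hwM, havu, havw, hvall⟩ := degF_eq_two (hdeg2 v hv)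
  have hnuw : ¬ G.Adj u w := fun h => noTriangle hG havu havw h
  obtain ⟨x, hxv, hxM, haux, huall⟩ := degF_eq_two' (hdeg2 u huM) hv havu.symm
  have hxw : x ≠ w := by
    rintro rfl
    exact hnuw haux
  have hxu : x ≠ u := haux.ne'
  -- forcing : a maximal indep set avoiding v and u contains x
  have hx_mem : ∀ S, IsMaxIndepIn G M S → v ∉ S → u ∉ S → x ∈ S := by
    intro S hS h1 h2
    obtain ⟨s, hsS, hadj⟩ := exists_adj_of_not_mem hS huM h2
    rcases huall s (hS.1 hsS) hadj with rfl | rfl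
    · exact absurd hsS h1
    · exact hsS
  have hn3 : 3 ≤ n := by
    have h1 := card_le_card (nbhdF_subset (G := G) (v := v) hv)
    have h2 : (nbhdF G M v).card = degF G M v + 1 := card_nbhdF
    rw [hdeg2 v hv] at h2
    omega
  have hN : numMaxIndep G M ≤
      ({S : Finset V | IsMaxIndepIn G M S ∧ v ∈ S}).ncard +
      (({S : Finset V | IsMaxIndepIn G M S ∧ u ∈ S}).ncard +
       ({S : Finset V | IsMaxIndepIn G M S ∧ w ∈ S ∧ v ∉ S ∧ u ∉ S}).ncard) := by
    rw [numMaxIndep]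
    refine le_trans (Set.ncard_le_ncard ?_ (Set.toFinite _))
      (le_trans (Set.ncard_union_le _ _) (add_le_add_right (Set.ncard_union_le _ _) _))
    intro S hS
    by_cases h1 : v ∈ S
    · exact Or.inl ⟨hS, h1⟩
    by_cases h2 : u ∈ S
    · exact Or.inr (Or.inl ⟨hS, h2⟩)
    refine Or.inr (Or.inr ⟨hS, ?_, h1, h2⟩)
    obtain ⟨s, hsS, hadj⟩ := exists_adj_of_not_mem hS hv h1
    rcases hvall s (hS.1 hsS) hadj with rfl | rfl
    · exact absurd hsS h2
    · exact hsS
  by_cases hWX : G.Adj w x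
  · -- then the third class is empty
    have hA3 : ({S : Finset V | IsMaxIndepIn G M S ∧ w ∈ S ∧ v ∉ S ∧ u ∉ S}) = ∅ := by
      rw [Set.eq_empty_iff_forall_notMem]
      rintro S ⟨hS, hw', hv', hu'⟩
      exact hS.2.1 w hw' x (hx_mem S hS hv' hu') hWX
    obtain ⟨k, rfl⟩ : ∃ k, n = k + 3 := ⟨n - 3, by omega⟩
    have c1 := main1 v hv k (by rw [hdeg2 v hv]; omega)
    have c2 := main1 u huM k (by rw [hdeg2 u huM]; omega)
    calc (numMaxIndep G M : ℝ)
        ≤ (({S : Finset V | IsMaxIndepIn G M S ∧ v ∈ S}).ncard : ℝ) +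
          ((({S : Finset V | IsMaxIndepIn G M S ∧ u ∈ S}).ncard : ℝ) +
           (({S : Finset V | IsMaxIndepIn G M S ∧ w ∈ S ∧ v ∉ S ∧ u ∉ S}).ncard : ℝ)) := by
            exact_mod_cast hN
      _ = (({S : Finset V | IsMaxIndepIn G M S ∧ v ∈ S}).ncard : ℝ) +
          ((({S : Finset V | IsMaxIndepIn G M S ∧ u ∈ S}).ncard : ℝ) + 0) := by
            rw [hA3]; simp
      _ ≤ (1.41422 : ℝ) ^ k + ((1.41422 : ℝ) ^ k + 0) := by
            exact add_le_add c1 (add_le_add c2 le_rfl)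
      _ = (1.41422 : ℝ) ^ k * 2 := by ring
      _ ≤ (1.41422 : ℝ) ^ k * 1.41422 ^ 3 := by
          refine mul_le_mul_of_nonneg_left (by norm_num) (by positivity)
      _ = (1.41422 : ℝ) ^ (k + 3) := by ring
  · -- w and x are not adjacent : double removal
    have huNw : u ∉ nbhdF G M w := by
      rw [mem_nbhdF]
      push_neg
      exact ⟨huw.symm ∘ Eq.symm, fun _ h => hnuw h.symm⟩
    have hxNw : x ∉ nbhdF G M w := by
      rw [mem_nbhdF]
      push_neg
      exact ⟨hxw, fun _ h => hWX h⟩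
    have hn5 : 5 ≤ n := by
      have hsub : insert x (insert u (nbhdF G M w)) ⊆ M := by
        intro a ha
        rcases mem_insert.1 ha with rfl | ha
        · exact hxM
        rcases mem_insert.1 ha with rfl | ha
        · exact huM
        exact nbhdF_subset hwM ha
      have h1 := card_le_card hsub
      have h2 : (nbhdF G M w).card = degF G M w + 1 := card_nbhdF
      rw [hdeg2 w hwM] at h2
      have h3 : (insert u (nbhdF G M w)).card = (nbhdF G M w).card + 1 :=
        card_insert_of_notMem huNw
      have h4 : (insert x (insert u (nbhdF G M w))).card = (insert u (nbhdF G M w)).card + 1 := by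
        refine card_insert_of_notMem ?_
        intro h
        rcases mem_insert.1 h with h' | h'
        · exact hxu h'
        · exact hxNw h'
      omega
    obtain ⟨k, rfl⟩ : ∃ k, n = k + 5 := ⟨n - 5, by omega⟩
    have c1 := main1 v hv (k + 2) (by rw [hdeg2 v hv]; omega)
    have c2 := main1 u huM (k + 2) (by rw [hdeg2 u huM]; omega)
    -- third class : remove closed neighborhoods of w and x
    set M₁ := M \ nbhdF G M w with hM₁
    have hxM1 : x ∈ M₁ := mem_sdiff.2 ⟨hxM, hxNw⟩
    have huM1 : u ∈ M₁ := mem_sdiff.2 ⟨huM, huNw⟩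
    set M₂ := M₁ \ nbhdF G M₁ x with hM₂
    have c3 : ({S : Finset V | IsMaxIndepIn G M S ∧ w ∈ S ∧ v ∉ S ∧ u ∉ S}).ncard ≤
        numMaxIndep G M₂ := by
      apply Set.ncard_le_ncard_of_injOn (fun S => (S.erase w).erase x)
      · rintro S ⟨hS, hw', hv', hu'⟩
        have hx' : x ∈ S := hx_mem S hS hv' hu'
        exact erase_max (erase_max hS hw') (mem_erase.2 ⟨hxw, hx'⟩)
      · rintro S₁ ⟨hS1, hw1, hv1, hu1⟩ S₂ ⟨hS2, hw2, hv2, hu2⟩ h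
        have hx1 : x ∈ S₁.erase w := mem_erase.2 ⟨hxw, hx_mem _ hS1 hv1 hu1⟩
        have hx2 : x ∈ S₂.erase w := mem_erase.2 ⟨hxw, hx_mem _ hS2 hv2 hu2⟩
        have h' := congrArg (insert x) h
        rw [insert_erase hx1, insert_erase hx2] at h'
        have h'' := congrArg (insert w) h'
        rwa [insert_erase hw1, insert_erase hw2] at h''
    have hM2card : M₂.card ≤ k ∧ M₂.card < k + 5 := by
      have e1 : M₂.card + (nbhdF G M₁ x).card = M₁.card :=
        card_sdiff_add_card_eq_card (nbhdF_subset hxM1)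
      have e2 : M₁.card + (nbhdF G M w).card = M.card :=
        card_sdiff_add_card_eq_card (nbhdF_subset hwM)
      have e3 : (nbhdF G M w).card = degF G M w + 1 := card_nbhdF
      rw [hdeg2 w hwM] at e3
      have e4 : 2 ≤ (nbhdF G M₁ x).card := by
        have hsub2 : ({x, u} : Finset V) ⊆ nbhdF G M₁ x := by
          intro a ha
          rcases mem_insert.1 ha with rfl | ha
          · exact self_mem_nbhdF
          rw [mem_singleton] at ha
          subst ha
          exact mem_nbhdF.2 (Or.inr ⟨huM1, haux.symm⟩)
        have := card_le_card hsub2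
        rwa [card_pair hxu] at this
      omega
    have c3' : (({S : Finset V | IsMaxIndepIn G M S ∧ w ∈ S ∧ v ∉ S ∧ u ∉ S}).ncard : ℝ) ≤
        (1.41422 : ℝ) ^ k := by
      calc (({S : Finset V | IsMaxIndepIn G M S ∧ w ∈ S ∧ v ∉ S ∧ u ∉ S}).ncard : ℝ)
          ≤ (numMaxIndep G M₂ : ℝ) := by exact_mod_cast c3
        _ ≤ (1.41422 : ℝ) ^ M₂.card := IH _ hM2card.2 _ rfl
        _ ≤ (1.41422 : ℝ) ^ k := pow_le_pow_right₀ ht1 hM2card.1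
    calc (numMaxIndep G M : ℝ)
        ≤ (({S : Finset V | IsMaxIndepIn G M S ∧ v ∈ S}).ncard : ℝ) +
          ((({S : Finset V | IsMaxIndepIn G M S ∧ u ∈ S}).ncard : ℝ) +
           (({S : Finset V | IsMaxIndepIn G M S ∧ w ∈ S ∧ v ∉ S ∧ u ∉ S}).ncard : ℝ)) := by
            exact_mod_cast hN
      _ ≤ (1.41422 : ℝ) ^ (k + 2) + ((1.41422 : ℝ) ^ (k + 2) + (1.41422 : ℝ) ^ k) :=
            add_le_add c1 (add_le_add c2 c3')
      _ = (1.41422 : ℝ) ^ k * (2 * 1.41422 ^ 2 + 1) := by ring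
      _ ≤ (1.41422 : ℝ) ^ k * 1.41422 ^ 5 := by
          refine mul_le_mul_of_nonneg_left (by norm_num) (by positivity)
      _ = (1.41422 : ℝ) ^ (k + 5) := by ring

end main

/-- `t = 1.41422` fits every finite simple triangle-free graph: every induced
subgraph `G[M]` has at most `1.41422^{|M|}` inclusion-maximal independent sets. -/
theorem stmt10 {V : Type*} [Fintype V] [DecidableEq V] (G : SimpleGraph V)
    (hG : G.CliqueFree 3) (M : Finset V) :
    (numMaxIndep G M : ℝ) ≤ 1.41422 ^ M.card := by
  exact key G hG M.card M rfl
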